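/- Let d, n, m be positive integers, κ > 0, ξ ≥ 0, i = (i₁, i₂, i₃) ∈ [d]³, and s = (s₁, s₂, s₃) ∈ {−1, 1}³; write ψ = ψ_{i,s}. Let D = (x₁, …, xₙ) with each x_t ∈ {−1, 1}^d and suppose ψ(x_t) = 1 for all t ∈ [n]. Let D' = (κx₁, …, κxₙ). Let D̃' = (x̃'₁, …, x̃'ₘ) be any tuple of points of ℝ^d. Let C^0 = {0}, C^ψ = {2κ·s₁·𝟏_{i₁}, 2κ·s₂·𝟏_{i₂}, 2κ·s₃·𝟏_{i₃}}, and for each i ∈ [d] let C^i = {+dκ·𝟏_i, −dκ·𝟏_i}. If |cost_{C,2}(D̃') − cost_{C,2}(D')| ≤ ξ for every C ∈ {C^0, C^ψ, C^1, …, C^d}, then (1/m) ∑_{t=1}^m ψ(sgn(x̃'_t)) ≥ 1 − ξ/(2κ²) − √ξ/κ. -/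

import Mathlib

open scoped BigOperators

/-- `sgn v = 1` if `v ≥ 0` and `-1` if `v < 0`. -/
noncomputable def sgn (v : ℝ) : ℝ := if 0 ≤ v then 1 else -1

/-- Coordinatewise sign of a vector in Euclidean space. -/
noncomputable def sgnVecE {d : ℕ} (y : EuclideanSpace ℝ (Fin d)) : EuclideanSpace ℝ (Fin d) :=
  WithLp.toLp 2 (fun i => sgn (y i))

/-- The `k`-means cost query in the Euclidean metric: `cost_{C,2}(x) = min_{c ∈ C} ‖x - c‖₂²`. -/
noncomputable def costE {d k : ℕ} (C : Fin k → EuclideanSpace ℝ (Fin d))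
    (x : EuclideanSpace ℝ (Fin d)) : ℝ :=
  ⨅ j : Fin k, ‖x - C j‖ ^ 2

/-- The Euclidean cost of a dataset: `cost_{C,2}(D) = (1/n) ∑_t cost_{C,2}(x_t)`. -/
noncomputable def costEData {d k n : ℕ} (C : Fin k → EuclideanSpace ℝ (Fin d))
    (D : Fin n → EuclideanSpace ℝ (Fin d)) : ℝ :=
  (∑ t, costE C (D t)) / n

/-- The 3-literal disjunction query `ψ_{i,s}`. -/
noncomputable def psi {d : ℕ} (idx : Fin 3 → Fin d) (s : Fin 3 → ℝ) (x : Fin d → ℝ) : ℝ :=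
  1 - (1 / 4) * ((1 - s 0 * x (idx 0)) * (1 - s 1 * x (idx 1)) * (1 - s 2 * x (idx 2)))

lemma normsq {d : ℕ} (y : EuclideanSpace ℝ (Fin d)) : ‖y‖^2 = ∑ i, (y i)^2 := by
  rw [EuclideanSpace.norm_eq, Real.sq_sqrt (by positivity)]
  simp [sq_abs]

lemma sub_single_normsq {d : ℕ} (y : EuclideanSpace ℝ (Fin d)) (i : Fin d) (c : ℝ) :
    ‖y - c • EuclideanSpace.single i (1:ℝ)‖^2 = ‖y‖^2 - 2*c*(y i) + c^2 := by
  have h : ∀ j, ((y - c • EuclideanSpace.single i (1:ℝ)) j)^2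
      = (y j)^2 - (if j = i then 2*c*(y j) - c^2 else 0) := by
    intro j
    have : (y - c • EuclideanSpace.single i (1:ℝ)) j = y j - c * (if j = i then 1 else 0) := by
      simp [EuclideanSpace.single_apply, PiLp.sub_apply, PiLp.smul_apply, smul_eq_mul]
    rw [this]
    split <;> ring
  rw [normsq, normsq]
  simp only [h, Finset.sum_sub_distrib]
  rw [Finset.sum_ite_eq' Finset.univ i (fun j => 2*c*(y j) - c^2)]
  simp only [Finset.mem_univ, if_true]
  ring

lemma costE_le {d k : ℕ} (C : Fin k → EuclideanSpace ℝ (Fin d)) (x : EuclideanSpace ℝ (Fin d))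
    (j : Fin k) : costE C x ≤ ‖x - C j‖ ^ 2 :=
  ciInf_le ⟨0, by rintro _ ⟨j, rfl⟩; positivity⟩ j

lemma le_costE {d k : ℕ} (hk : 0 < k) (C : Fin k → EuclideanSpace ℝ (Fin d))
    (x : EuclideanSpace ℝ (Fin d)) (c : ℝ) (h : ∀ j, c ≤ ‖x - C j‖ ^ 2) : c ≤ costE C x := by
  haveI : Nonempty (Fin k) := Fin.pos_iff_nonempty.mp hk
  exact le_ciInf h

lemma costE_zero {d : ℕ} (x : EuclideanSpace ℝ (Fin d)) :
    costE (fun _ : Fin 1 => (0 : EuclideanSpace ℝ (Fin d))) x = ‖x‖ ^ 2 := by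
  unfold costE
  rw [ciInf_unique]
  simp

lemma key_ineq {d : ℕ} (idx : Fin 3 → Fin d) (s : Fin 3 → ℝ) (hs : ∀ j, s j = 1 ∨ s j = -1)
    (κ : ℝ) (y : EuclideanSpace ℝ (Fin d)) (j : Fin 3) :
    s j * y (idx j) ≤ κ * psi idx s (sgnVecE y) + Real.sqrt (∑ i, (|y i| - κ)^2) := by
  set R := Real.sqrt (∑ i, (|y i| - κ)^2) with hRdef
  have hR : ∀ i, |(|y i| - κ)| ≤ R := by
    intro i
    rw [hRdef, ← Real.sqrt_sq_eq_abs]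
    exact Real.sqrt_le_sqrt (Finset.single_le_sum (f := fun i => (|y i| - κ)^2)
      (fun i _ => sq_nonneg _) (Finset.mem_univ i))
  have hsgn : ∀ v : ℝ, sgn v = 1 ∨ sgn v = -1 := by
    intro v; unfold sgn; split
    · left; rfl
    · right; rfl
  have hpsi : psi idx s (sgnVecE y) = 1 - (1/4)*((1 - s 0 * sgn (y (idx 0)))
      * (1 - s 1 * sgn (y (idx 1))) * (1 - s 2 * sgn (y (idx 2)))) := rfl
  have hf : ∀ j', (1 - s j' * sgn (y (idx j'))) = 0 ∨ (1 - s j' * sgn (y (idx j'))) = 2 := by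
    intro j'
    rcases hs j' with h | h <;> rcases hsgn (y (idx j')) with h2 | h2 <;> rw [h, h2] <;> norm_num
  have habs : s j * y (idx j) ≤ |y (idx j)| := by
    rcases hs j with h | h <;> rw [h]
    · rw [one_mul]; exact le_abs_self _
    · rw [neg_one_mul]; exact neg_le_abs _
  rcases hf 0 with h0 | h0 <;> rcases hf 1 with h1 | h1 <;> rcases hf 2 with h2 | h2
  all_goals try {
    have hψ1 : psi idx s (sgnVecE y) = 1 := by
      rw [hpsi]
      first
      | (rw [h0]; ring1)
      | (rw [h1]; ring1)
      | (rw [h2]; ring1)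
    rw [hψ1, mul_one]
    have hRj := hR (idx j)
    have := le_abs_self (|y (idx j)| - κ)
    linarith }
  have e0 : s 0 * sgn (y (idx 0)) = -1 := by linarith
  have e1 : s 1 * sgn (y (idx 1)) = -1 := by linarith
  have e2 : s 2 * sgn (y (idx 2)) = -1 := by linarith
  have hψm : psi idx s (sgnVecE y) = -1 := by rw [hpsi, h0, h1, h2]; norm_num
  have ej : s j * sgn (y (idx j)) = -1 := by
    fin_cases j
    · exact e0
    · exact e1
    · exact e2
  have hsign : s j * y (idx j) = -|y (idx j)| := by
    rcases hs j with h | h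
    · rw [h, one_mul] at ej ⊢
      have hy : y (idx j) < 0 := by
        by_contra hy'
        push_neg at hy'
        unfold sgn at ej
        rw [if_pos hy'] at ej
        norm_num at ej
      rw [abs_of_neg hy]; ring
    · rw [h] at ej ⊢
      have hy : 0 ≤ y (idx j) := by
        by_contra hy'
        push_neg at hy'
        unfold sgn at ej
        rw [if_neg (not_le.mpr hy')] at ej
        norm_num at ej
      rw [abs_of_nonneg hy]; ring
  rw [hsign, hψm]
  have hRj := hR (idx j)
  have := neg_abs_le (|y (idx j)| - κ)
  linarith

set_option maxHeartbeats 1000000 in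
theorem stmt_12 (d n m : ℕ) (hd : 0 < d) (hn : 0 < n) (hm : 0 < m)
    (κ ξ : ℝ) (hκ : 0 < κ) (hξ : 0 ≤ ξ)
    (idx : Fin 3 → Fin d) (s : Fin 3 → ℝ) (hs : ∀ j, s j = 1 ∨ s j = -1)
    (x : Fin n → EuclideanSpace ℝ (Fin d)) (hx : ∀ t i, x t i = 1 ∨ x t i = -1)
    (hψ : ∀ t, psi idx s (x t) = 1)
    (Dtil : Fin m → EuclideanSpace ℝ (Fin d))
    (hC0 : |costEData (fun _ : Fin 1 => (0 : EuclideanSpace ℝ (Fin d))) Dtil -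
        costEData (fun _ : Fin 1 => (0 : EuclideanSpace ℝ (Fin d))) (fun t => κ • x t)| ≤ ξ)
    (hCψ : |costEData (fun j : Fin 3 => (2 * κ * s j) • EuclideanSpace.single (idx j) (1 : ℝ)) Dtil -
        costEData (fun j : Fin 3 => (2 * κ * s j) • EuclideanSpace.single (idx j) (1 : ℝ))
          (fun t => κ • x t)| ≤ ξ)
    (hCi : ∀ i : Fin d,
      |costEData ![(d * κ) • EuclideanSpace.single i (1 : ℝ),
                   (-(d * κ)) • EuclideanSpace.single i (1 : ℝ)] Dtil -
        costEData ![(d * κ) • EuclideanSpace.single i (1 : ℝ),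
                    (-(d * κ)) • EuclideanSpace.single i (1 : ℝ)] (fun t => κ • x t)| ≤ ξ) :
    (∑ t, psi idx s (sgnVecE (Dtil t))) / m ≥ 1 - ξ / (2 * κ ^ 2) - Real.sqrt ξ / κ := by
  have hm' : (0:ℝ) < m := by exact_mod_cast hm
  have hn' : (0:ℝ) < n := by exact_mod_cast hn
  have hd' : (0:ℝ) < d := by exact_mod_cast hd
  set SA : ℝ := ∑ t, ‖Dtil t‖^2 with hSA
  set SP : ℝ := ∑ t, psi idx s (sgnVecE (Dtil t)) with hSP
  set SS : ℝ := ∑ t, Real.sqrt (∑ i, (|Dtil t i| - κ)^2) with hSSdef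
  set SZ : ℝ := ∑ t, ∑ i, (|Dtil t i| - κ)^2 with hSZdef
  -- basic facts about the hypercube points
  have hxsq : ∀ t i, (x t i)^2 = 1 := fun t i => by rcases hx t i with h | h <;> rw [h] <;> norm_num
  have hxi : ∀ t (i : Fin d), ((κ • x t : EuclideanSpace ℝ (Fin d)) i) = κ * x t i := fun t i => rfl
  have hnormx : ∀ t, ‖(κ • x t : EuclideanSpace ℝ (Fin d))‖^2 = d * κ^2 := by
    intro t
    rw [normsq]
    have h : ∀ i, ((κ • x t : EuclideanSpace ℝ (Fin d)) i)^2 = κ^2 := by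
      intro i
      rw [hxi, mul_pow, hxsq t i, mul_one]
    simp only [h, Finset.sum_const, Finset.card_univ, Fintype.card_fin, nsmul_eq_mul]
    try ring
  have hs2 : ∀ j, (s j)^2 = 1 := fun j => by rcases hs j with h | h <;> rw [h] <;> norm_num
  -- G1 : lower bound on SA from hC0
  have hcost0til : costEData (fun _ : Fin 1 => (0 : EuclideanSpace ℝ (Fin d))) Dtil = SA / m := by
    unfold costEData
    simp only [costE_zero]
    rfl
  have hcost0D' : costEData (fun _ : Fin 1 => (0 : EuclideanSpace ℝ (Fin d)))
      (fun t => κ • x t) = d * κ^2 := by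
    unfold costEData
    simp only [costE_zero, hnormx]
    rw [Finset.sum_const, Finset.card_univ, Fintype.card_fin, nsmul_eq_mul]
    field_simp
  have G1 : (d*κ^2 - ξ) * m ≤ SA := by
    have h1 := (abs_le.mp hC0).1
    rw [hcost0til, hcost0D'] at h1
    rw [← le_div_iff₀ hm']
    linarith
  -- sat literal for each D' point
  have hsat : ∀ t, ∃ j, s j * x t (idx j) = 1 := by
    intro t
    have h := hψ t
    unfold psi at h
    have hprod : (1 - s 0 * x t (idx 0)) * (1 - s 1 * x t (idx 1)) * (1 - s 2 * x t (idx 2)) = 0 := by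
      linarith
    rcases mul_eq_zero.mp hprod with h' | h'
    · rcases mul_eq_zero.mp h' with h'' | h''
      · exact ⟨0, by linarith⟩
      · exact ⟨1, by linarith⟩
    · exact ⟨2, by linarith⟩
  -- Cψ : D' side upper bound
  have hcostψD' : costEData
      (fun j : Fin 3 => (2 * κ * s j) • EuclideanSpace.single (idx j) (1 : ℝ))
      (fun t => κ • x t) ≤ d * κ^2 := by
    unfold costEData
    rw [div_le_iff₀ hn']
    have hpt : ∀ t : Fin n, costE
        (fun j : Fin 3 => (2 * κ * s j) • EuclideanSpace.single (idx j) (1 : ℝ))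
        (κ • x t) ≤ d * κ^2 := by
      intro t
      obtain ⟨j₀, hj₀⟩ := hsat t
      refine le_trans (costE_le _ _ j₀) ?_
      rw [sub_single_normsq, hnormx, hxi]
      have heq : (d:ℝ)*κ^2 - 2*(2*κ*s j₀)*(κ * x t (idx j₀)) + (2*κ*s j₀)^2 = d*κ^2 := by
        linear_combination (4*κ^2) * hs2 j₀ - (4*κ^2) * hj₀
      rw [heq]
    calc ∑ t, costE (fun j : Fin 3 => (2 * κ * s j) • EuclideanSpace.single (idx j) (1 : ℝ))
          ((fun t => κ • x t) t) ≤ ∑ _t : Fin n, (d*κ^2 : ℝ) :=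
        Finset.sum_le_sum (fun t _ => hpt t)
      _ = d*κ^2 * n := by
        rw [Finset.sum_const, Finset.card_univ, Fintype.card_fin, nsmul_eq_mul]; ring
  -- Cψ : Dtil side pointwise lower bound
  have hlow : ∀ t, ‖Dtil t‖^2 + 4*κ^2 - 4*κ^2 * psi idx s (sgnVecE (Dtil t))
      - 4*κ*Real.sqrt (∑ i, (|Dtil t i| - κ)^2) ≤ costE
      (fun j : Fin 3 => (2 * κ * s j) • EuclideanSpace.single (idx j) (1 : ℝ)) (Dtil t) := by
    intro t
    apply le_costE (by norm_num)
    intro j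
    rw [sub_single_normsq]
    have hkey := key_ineq idx s hs κ (Dtil t) j
    have hmul := mul_le_mul_of_nonneg_left hkey (by positivity : (0:ℝ) ≤ 4*κ)
    have hs2' : 4*κ^2*(s j)^2 = 4*κ^2 := by rw [hs2 j]; ring
    nlinarith [hmul, hs2']
  -- G2
  have G2 : SA + (m:ℝ)*(4*κ^2) - 4*κ^2*SP - 4*κ*SS ≤ (d*κ^2 + ξ) * m := by
    have h2 := (abs_le.mp hCψ).2
    have htill : costEData
        (fun j : Fin 3 => (2 * κ * s j) • EuclideanSpace.single (idx j) (1 : ℝ)) Dtil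
        ≤ d*κ^2 + ξ := by linarith
    unfold costEData at htill
    rw [div_le_iff₀ hm'] at htill
    have hsum : SA + (m:ℝ)*(4*κ^2) - 4*κ^2*SP - 4*κ*SS
        = ∑ t, (‖Dtil t‖^2 + 4*κ^2 - 4*κ^2 * psi idx s (sgnVecE (Dtil t))
          - 4*κ*Real.sqrt (∑ i, (|Dtil t i| - κ)^2)) := by
      rw [hSA, hSP, hSSdef]
      rw [Finset.sum_sub_distrib, Finset.sum_sub_distrib, Finset.sum_add_distrib,
        Finset.sum_const, Finset.card_univ, Fintype.card_fin, nsmul_eq_mul,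
        ← Finset.mul_sum, ← Finset.mul_sum]
    rw [hsum]
    calc ∑ t, (‖Dtil t‖^2 + 4*κ^2 - 4*κ^2 * psi idx s (sgnVecE (Dtil t))
          - 4*κ*Real.sqrt (∑ i, (|Dtil t i| - κ)^2))
        ≤ ∑ t, costE
          (fun j : Fin 3 => (2 * κ * s j) • EuclideanSpace.single (idx j) (1 : ℝ)) (Dtil t) :=
        Finset.sum_le_sum (fun t _ => hlow t)
      _ ≤ (d*κ^2 + ξ) * m := htill
  -- C^i : D' side upper bound
  have hcostiD' : ∀ i : Fin d, costEData
      ![((d:ℝ) * κ) • EuclideanSpace.single i (1 : ℝ),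
        (-((d:ℝ) * κ)) • EuclideanSpace.single i (1 : ℝ)] (fun t => κ • x t)
      ≤ κ^2*d*(d-1) := by
    intro i
    unfold costEData
    rw [div_le_iff₀ hn']
    have hpt : ∀ t : Fin n, costE
        ![((d:ℝ) * κ) • EuclideanSpace.single i (1 : ℝ),
          (-((d:ℝ) * κ)) • EuclideanSpace.single i (1 : ℝ)] (κ • x t) ≤ κ^2*d*(d-1) := by
      intro t
      rcases hx t i with h | h
      · refine le_trans (costE_le _ _ 0) ?_
        simp only [Matrix.cons_val_zero]
        rw [sub_single_normsq, hnormx, hxi, h]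
        exact le_of_eq (by ring)
      · refine le_trans (costE_le _ _ 1) ?_
        simp only [Matrix.cons_val_one, Matrix.head_cons, Matrix.cons_val_zero]
        rw [sub_single_normsq, hnormx, hxi, h]
        exact le_of_eq (by ring)
    calc (∑ t, costE ![((d:ℝ) * κ) • EuclideanSpace.single i (1 : ℝ),
            (-((d:ℝ) * κ)) • EuclideanSpace.single i (1 : ℝ)] ((fun t => κ • x t) t))
        ≤ ∑ _t : Fin n, (κ^2*d*(d-1) : ℝ) := Finset.sum_le_sum (fun t _ => hpt t)
      _ = κ^2*d*(d-1) * n := by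
        rw [Finset.sum_const, Finset.card_univ, Fintype.card_fin, nsmul_eq_mul]; ring
  -- C^i : Dtil side pointwise lower bound
  have hlowi : ∀ (i : Fin d) t, ‖Dtil t‖^2 + ((d:ℝ)*κ)^2 - 2*((d:ℝ)*κ)*|Dtil t i|
      ≤ costE ![((d:ℝ) * κ) • EuclideanSpace.single i (1 : ℝ),
          (-((d:ℝ) * κ)) • EuclideanSpace.single i (1 : ℝ)] (Dtil t) := by
    intro i t
    apply le_costE (by norm_num)
    intro j
    have habs1 := le_abs_self (Dtil t i)
    have habs2 := neg_abs_le (Dtil t i)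
    have hdk : (0:ℝ) ≤ 2*((d:ℝ)*κ) := by positivity
    fin_cases j
    · simp only [Fin.mk_zero, Fin.mk_one, Matrix.cons_val_zero]
      rw [sub_single_normsq]
      linarith [mul_le_mul_of_nonneg_left habs1 hdk]
    · simp only [Fin.mk_zero, Fin.mk_one, Matrix.cons_val_one, Matrix.head_cons, Matrix.cons_val_zero]
      rw [sub_single_normsq]
      linarith [mul_le_mul_of_nonneg_left habs2 hdk]
  -- G3
  have G3 : ∀ i : Fin d, SA + (m:ℝ)*((d:ℝ)*κ)^2 - 2*((d:ℝ)*κ)*(∑ t, |Dtil t i|)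
      ≤ (κ^2*d*(d-1) + ξ)*m := by
    intro i
    have h2 := (abs_le.mp (hCi i)).2
    have htill : costEData
        ![((d:ℝ) * κ) • EuclideanSpace.single i (1 : ℝ),
          (-((d:ℝ) * κ)) • EuclideanSpace.single i (1 : ℝ)] Dtil ≤ κ^2*d*(d-1) + ξ := by
      have := hcostiD' i
      linarith
    unfold costEData at htill
    rw [div_le_iff₀ hm'] at htill
    have hsum : SA + (m:ℝ)*((d:ℝ)*κ)^2 - 2*((d:ℝ)*κ)*(∑ t, |Dtil t i|)
        = ∑ t, (‖Dtil t‖^2 + ((d:ℝ)*κ)^2 - 2*((d:ℝ)*κ)*|Dtil t i|) := by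
      rw [hSA]
      rw [Finset.sum_sub_distrib, Finset.sum_add_distrib, Finset.sum_const,
        Finset.card_univ, Fintype.card_fin, nsmul_eq_mul, ← Finset.mul_sum]
    rw [hsum]
    calc ∑ t, (‖Dtil t‖^2 + ((d:ℝ)*κ)^2 - 2*((d:ℝ)*κ)*|Dtil t i|)
        ≤ ∑ t, costE ![((d:ℝ) * κ) • EuclideanSpace.single i (1 : ℝ),
            (-((d:ℝ) * κ)) • EuclideanSpace.single i (1 : ℝ)] (Dtil t) :=
          Finset.sum_le_sum (fun t _ => hlowi i t)
      _ ≤ (κ^2*d*(d-1) + ξ)*m := htill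
  -- pointwise expansion of Z
  have pert : ∀ t, ∑ i, (|Dtil t i| - κ)^2
      = ‖Dtil t‖^2 - 2*κ*(∑ i, |Dtil t i|) + d*κ^2 := by
    intro t
    have h : ∀ i : Fin d, (|Dtil t i| - κ)^2 = (Dtil t i)^2 - 2*κ*|Dtil t i| + κ^2 := by
      intro i; rw [sub_sq, sq_abs]; ring
    rw [normsq]
    simp only [h]
    rw [Finset.sum_add_distrib, Finset.sum_sub_distrib, Finset.sum_const,
      Finset.card_univ, Fintype.card_fin, nsmul_eq_mul, ← Finset.mul_sum]
    try ring
  have hswap : ∑ t, ∑ i, |Dtil t i| = ∑ i, ∑ t, |Dtil t i| := Finset.sum_comm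
  have hSZeq : SZ = SA - 2*κ*(∑ i, ∑ t, |Dtil t i|) + m*((d:ℝ)*κ^2) := by
    rw [hSZdef, hSA]
    simp only [pert]
    rw [Finset.sum_add_distrib, Finset.sum_sub_distrib, Finset.sum_const,
      Finset.card_univ, Fintype.card_fin, nsmul_eq_mul, ← Finset.mul_sum, hswap]
  -- sum of G3 over i
  have hG3sum : ∑ _i : Fin d, (SA + (m:ℝ)*((d:ℝ)*κ)^2)
      - 2*((d:ℝ)*κ)*(∑ i, ∑ t, |Dtil t i|) ≤ ∑ _i : Fin d, ((κ^2*d*(d-1) + ξ)*m) := by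
    have h := Finset.sum_le_sum (fun i (_ : i ∈ Finset.univ) => G3 i)
    rw [Finset.sum_sub_distrib, ← Finset.mul_sum] at h
    exact h
  have hG3sum' : (d:ℝ)*(SA + (m:ℝ)*((d:ℝ)*κ)^2) - 2*((d:ℝ)*κ)*(∑ i, ∑ t, |Dtil t i|)
      ≤ (d:ℝ)*((κ^2*d*(d-1) + ξ)*m) := by
    have h := hG3sum
    rw [Finset.sum_const, Finset.sum_const, Finset.card_univ, Fintype.card_fin,
      nsmul_eq_mul, nsmul_eq_mul] at h
    exact h
  have hL1 : SA + (m:ℝ)*((d:ℝ)*κ^2) - m*ξ ≤ 2*κ*(∑ i, ∑ t, |Dtil t i|) := by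
    have hmul : (d:ℝ) * (SA + (m:ℝ)*((d:ℝ)*κ^2) - m*ξ)
        ≤ (d:ℝ) * (2*κ*(∑ i, ∑ t, |Dtil t i|)) := by
      nlinarith [hG3sum']
    exact le_of_mul_le_mul_left hmul hd'
  have G4 : SZ ≤ ξ * m := by
    rw [hSZeq]
    linarith [hL1]
  -- G5
  have hSSnn : 0 ≤ SS := by
    rw [hSSdef]
    exact Finset.sum_nonneg (fun t _ => Real.sqrt_nonneg _)
  have hss2 : SS^2 ≤ (m:ℝ) * SZ := by
    have h := sq_sum_le_card_mul_sum_sq (s := (Finset.univ : Finset (Fin m)))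
      (f := fun t => Real.sqrt (∑ i, (|Dtil t i| - κ)^2))
    have hZ : ∀ t : Fin m, (Real.sqrt (∑ i, (|Dtil t i| - κ)^2))^2
        = ∑ i, (|Dtil t i| - κ)^2 := fun t => Real.sq_sqrt (by positivity)
    simp only [hZ, Finset.card_univ, Fintype.card_fin] at h
    rw [hSSdef, hSZdef]
    exact_mod_cast h
  have G5 : SS ≤ (m:ℝ) * Real.sqrt ξ := by
    have hms : (0:ℝ) ≤ (m:ℝ) * Real.sqrt ξ := by positivity
    have hsq : SS^2 ≤ ((m:ℝ) * Real.sqrt ξ)^2 := by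
      have he : ((m:ℝ) * Real.sqrt ξ)^2 = (m:ℝ)^2 * ξ := by
        rw [mul_pow, Real.sq_sqrt hξ]
      rw [he]
      nlinarith [hss2, mul_le_mul_of_nonneg_left G4 hm'.le]
    calc SS = Real.sqrt (SS^2) := (Real.sqrt_sq hSSnn).symm
      _ ≤ Real.sqrt (((m:ℝ) * Real.sqrt ξ)^2) := Real.sqrt_le_sqrt hsq
      _ = (m:ℝ) * Real.sqrt ξ := Real.sqrt_sq hms
  -- conclusion
  rw [ge_iff_le, le_div_iff₀ hm']
  have h4κ : (0:ℝ) < 4*κ^2 := by positivity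
  have key : (m:ℝ)*(4*κ^2 - 2*ξ - 4*κ*Real.sqrt ξ) ≤ 4*κ^2*SP := by
    have hss := mul_le_mul_of_nonneg_left G5 (by positivity : (0:ℝ) ≤ 4*κ)
    linarith [G1, G2, hss]
  have heq : 4*κ^2*((1 - ξ/(2*κ^2) - Real.sqrt ξ/κ)*(m:ℝ))
      = (m:ℝ)*(4*κ^2 - 2*ξ - 4*κ*Real.sqrt ξ) := by
    field_simp
    ring
  exact le_of_mul_le_mul_left (by rw [heq]; linarith [key]) h4κ
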